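/- Let k ≥ 1 be an integer and let z ∈ ℂ satisfy Re(z) ≥ 0 and z ≠ 0. Then |R̂_{k+1}(z)| < η_k · √(πk) · |T̂_k(z)|. -/

import Mathlib

open MeasureTheory Real

/-- The factor `η_k = 1 / (1 - 2 ^ (1 - 2k))`. -/
noncomputable def eta (k : ℕ) : ℝ := 1 / (1 - (2 : ℝ) ^ ((1 : ℤ) - 2 * k))

/-- The `j`-th term of Gauss's asymptotic series for `log Γ(z + 1/2)`. -/
noncomputable def That (j : ℕ) (z : ℂ) : ℂ :=
  ((Polynomial.aeval ((1 : ℝ) / 2) (Polynomial.bernoulli (2 * j)) : ℝ) : ℂ) /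
    ((2 * (j : ℂ)) * (2 * (j : ℂ) - 1) * z ^ (2 * j - 1))

/-- `Rhatnext k z` is the remainder `R̂_{k+1}(z)` after `k` terms of Gauss's series. -/
noncomputable def Rhatnext (k : ℕ) (z : ℂ) : ℂ :=
  -∫ u in Set.Ioi (0 : ℝ),
    ((Polynomial.aeval (Int.fract (u + 1 / 2)) (Polynomial.bernoulli (2 * k)) : ℝ) : ℂ) /
      ((2 * (k : ℂ)) * ((u : ℂ) + z) ^ (2 * k))

/-- `Rhat k z` is the remainder `R̂_k(z)` after `k - 1` terms of Gauss's series. -/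
noncomputable def Rhat (k : ℕ) (z : ℂ) : ℂ := That k z + Rhatnext k z


set_option maxHeartbeats 1000000

section Aux
open Filter Topology

noncomputable def Pk (k : ℕ) : Polynomial ℝ := (Polynomial.bernoulli (2*k)).map (algebraMap ℚ ℝ)

lemma two_c_eq (k : ℕ) : (2:ℝ) ^ ((1:ℤ) - 2 * k) = 2 * ((2:ℝ) ^ (2*k))⁻¹ := by
  have h : ((1:ℤ) - 2*k) = 1 - ((2*k : ℕ) : ℤ) := by push_cast; ring
  rw [h, zpow_sub₀ (two_ne_zero), zpow_one, zpow_natCast, div_eq_mul_inv]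

lemma two_c_lt_one (k : ℕ) (hk : 1 ≤ k) : 2 * ((2:ℝ) ^ (2*k))⁻¹ ≤ 1/2 := by
  have h4 : (4:ℝ) ≤ 2 ^ (2*k) := by
    calc (4:ℝ) = 2 ^ 2 := by norm_num
    _ ≤ 2 ^ (2*k) := by
      apply pow_le_pow_right₀ one_le_two; omega
  rw [mul_inv_le_iff₀ (by positivity)]
  nlinarith

lemma eta_pos (k : ℕ) (hk : 1 ≤ k) : 0 < eta k := by
  have := two_c_lt_one k hk
  rw [eta, two_c_eq]
  have h2 : (0:ℝ) < 1 - 2 * ((2:ℝ) ^ (2*k))⁻¹ := by linarith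
  positivity

lemma bernoulli_sup_bound (k : ℕ) (hk : 1 ≤ k) :
    ∃ M : ℝ, 0 < M ∧
      M = eta k * |(Pk k).eval (1/2 : ℝ)| ∧
      (∀ x ∈ Set.Icc (0:ℝ) 1, |(Pk k).eval x| ≤ M) ∧
      (∀ x ∈ Set.Ioo (0:ℝ) 1, x ≠ 1/2 → |(Pk k).eval x| < M) := by
  have hk0 : k ≠ 0 := by omega
  set f : ℕ → ℝ := fun n => 1 / (n:ℝ) ^ (2*k) with hf
  have hZsum : Summable f := (hasSum_zeta_nat hk0).summable
  set Z : ℝ := ∑' n, f n with hZdef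
  have hZ : HasSum f Z := hZsum.hasSum
  have hfnonneg : ∀ n, 0 ≤ f n := fun n => by positivity
  have hf1 : f 1 = 1 := by simp [hf]
  have hZ1 : 1 ≤ Z := by
    have := le_hasSum hZ 1 (fun j _ => hfnonneg j)
    rwa [hf1] at this
  set c : ℝ := ((2:ℝ) ^ (2*k))⁻¹ with hc
  -- even-index sum
  have h2 : HasSum (fun n => f (2*n)) (c * Z) := by
    have heq : (fun n => f (2*n)) = fun n => c * f n := by
      funext n
      simp only [hf, hc, Nat.cast_mul, Nat.cast_ofNat, mul_pow, one_div, mul_inv]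
    rw [heq]
    exact hZ.mul_left c
  set g : ℕ → ℝ := fun n => (-1:ℝ)^n * f n with hg
  have heven : HasSum (fun n => f (2*n) + g (2*n)) (2 * (c * Z)) := by
    have heq : (fun n => f (2*n) + g (2*n)) = fun n => 2 * f (2*n) := by
      funext n
      have h1 : ((-1:ℝ)) ^ (2*n) = 1 := by
        rw [pow_mul]; norm_num
      simp [hg, h1]; ring
    rw [heq]
    exact h2.mul_left 2
  have hodd : HasSum (fun n => f (2*n+1) + g (2*n+1)) 0 := by
    have heq : (fun n => f (2*n+1) + g (2*n+1)) = fun _ => (0:ℝ) := by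
      funext n
      have h1 : ((-1:ℝ)) ^ (2*n+1) = -1 := by
        rw [pow_succ, pow_mul]; norm_num
      simp [hg, h1]
    rw [heq]
    exact hasSum_zero
  have hfg : HasSum (fun n => f n + g n) (2 * (c * Z) + 0) := heven.even_add_odd hodd
  have hgsum : HasSum g (2 * (c * Z) - Z) := by
    have := hfg.sub hZ
    simpa using this
  -- Fourier sum at 1/2
  have hmem : (1/2 : ℝ) ∈ Set.Icc (0:ℝ) 1 := by norm_num
  have hcos := hasSum_one_div_nat_pow_mul_cos hk0 hmem
  have hcosg : (fun n : ℕ => 1/(n:ℝ)^(2*k) * Real.cos (2*π*n*(1/2))) = g := by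
    funext n
    have h1 : (2*π*(n:ℝ)*(1/2:ℝ)) = 0 + (n:ℝ) * π := by ring
    rw [h1, Real.cos_add_nat_mul_pi, Real.cos_zero, mul_one]
    simp only [hg, hf]; ring
  rw [hcosg] at hcos
  obtain ⟨A, hA⟩ : ∃ A : ℝ, A = (2*π)^(2*k) / 2 / (2*k).factorial := ⟨_, rfl⟩
  have hPk : (Pk k) = Polynomial.map (algebraMap ℚ ℝ) (Polynomial.bernoulli (2*k)) := rfl
  have hApos : 0 < A := by
    rw [hA]
    have : (0:ℝ) < π := pi_pos
    positivity
  have hval : (-1:ℝ)^(k+1) * (2*π)^(2*k) / 2 / (2*k).factorial * (Pk k).eval (1/2 : ℝ)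
      = 2 * (c * Z) - Z := hcos.unique hgsum
  have habsval : A * |(Pk k).eval (1/2 : ℝ)| = (1 - 2*c) * Z := by
    have h2c := two_c_lt_one k hk
    have : |(-1:ℝ)^(k+1) * (2*π)^(2*k) / 2 / (2*k).factorial * (Pk k).eval (1/2 : ℝ)|
        = |2 * (c * Z) - Z| := by rw [hval]
    rw [abs_mul, abs_div, abs_div, abs_mul, abs_pow, abs_neg, abs_one, one_pow, one_mul] at this
    rw [abs_of_nonneg (by positivity : (0:ℝ) ≤ (2*π)^(2*k)), abs_of_nonneg (by norm_num : (0:ℝ) ≤ (2:ℝ)),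
      abs_of_nonneg (by positivity : (0:ℝ) ≤ ((2*k).factorial : ℝ))] at this
    rw [← hA] at this
    rw [this, abs_of_nonpos (by nlinarith)]
    ring
  obtain ⟨M, hM⟩ : ∃ M : ℝ, M = Z / A := ⟨_, rfl⟩
  have hMpos : 0 < M := by rw [hM]; positivity
  have h2c := two_c_lt_one k hk
  have hMeta : M = eta k * |(Pk k).eval (1/2 : ℝ)| := by
    have h1 : |(Pk k).eval (1/2 : ℝ)| = (1 - 2*c) * Z / A := by
      rw [eq_div_iff (ne_of_gt hApos), mul_comm, ← habsval, mul_comm]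
    have hne : (1 - 2*c) ≠ 0 := by nlinarith
    rw [h1, hM, eta, two_c_eq, ← hc, one_div, mul_comm, div_mul_eq_mul_div, mul_right_comm,
      mul_inv_cancel₀ hne, one_mul]
  refine ⟨M, hMpos, hMeta, ?_, ?_⟩
  · intro x hx
    have hs := hasSum_one_div_nat_pow_mul_cos hk0 hx
    set t : ℕ → ℝ := fun n => 1/(n:ℝ)^(2*k) * Real.cos (2*π*n*x) with ht
    have htf : ∀ n, |t n| ≤ f n := by
      intro n
      rw [ht]
      calc |1/(n:ℝ)^(2*k) * Real.cos (2*π*n*x)| = f n * |Real.cos (2*π*n*x)| := by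
            rw [abs_mul, abs_of_nonneg (hfnonneg n)]
        _ ≤ f n * 1 := by
            apply mul_le_mul_of_nonneg_left (Real.abs_cos_le_one _) (hfnonneg n)
        _ = f n := mul_one _
    have htsummable : Summable t := hs.summable
    have habs : |(-1:ℝ)^(k+1) * (2*π)^(2*k) / 2 / (2*k).factorial * (Pk k).eval x| ≤ Z := by
      rw [hPk, ← hs.tsum_eq]
      calc |∑' n, t n| ≤ ∑' n, |t n| := by
            have := norm_tsum_le_tsum_norm (f := t) (by simpa [Real.norm_eq_abs] using htsummable.abs)
            simpa [Real.norm_eq_abs] using this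
        _ ≤ ∑' n, f n := Summable.tsum_le_tsum htf htsummable.abs hZsum
    have : A * |(Pk k).eval x| ≤ Z := by
      rw [abs_mul, abs_div, abs_div, abs_mul, abs_pow, abs_neg, abs_one, one_pow, one_mul,
        abs_of_nonneg (by positivity : (0:ℝ) ≤ (2*π)^(2*k)), abs_of_nonneg (by norm_num : (0:ℝ) ≤ (2:ℝ)),
        abs_of_nonneg (by positivity : (0:ℝ) ≤ ((2*k).factorial : ℝ)), ← hA] at habs
      exact habs
    rw [hM, le_div_iff₀ hApos]
    linarith [this]
  · intro x hx hxhalf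
    have hx' : x ∈ Set.Icc (0:ℝ) 1 := ⟨le_of_lt hx.1, le_of_lt hx.2⟩
    have hs := hasSum_one_div_nat_pow_mul_cos hk0 hx'
    set t : ℕ → ℝ := fun n => 1/(n:ℝ)^(2*k) * Real.cos (2*π*n*x) with ht
    have htf : ∀ n, |t n| ≤ f n := by
      intro n
      rw [ht]
      calc |1/(n:ℝ)^(2*k) * Real.cos (2*π*n*x)| = f n * |Real.cos (2*π*n*x)| := by
            rw [abs_mul, abs_of_nonneg (hfnonneg n)]
        _ ≤ f n * 1 := by
            apply mul_le_mul_of_nonneg_left (Real.abs_cos_le_one _) (hfnonneg n)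
        _ = f n := mul_one _
    have htsummable : Summable t := hs.summable
    -- strictness at n = 1
    have hsin : Real.sin (2*π*x) ≠ 0 := by
      intro h
      rcases Real.sin_eq_zero_iff.mp h with ⟨n, hn⟩
      have hx2 : (n:ℝ) = 2 * x := by
        have hπ : (0:ℝ) < π := pi_pos
        have h' : (n:ℝ) * π = (2*x) * π := by rw [hn]; ring
        exact mul_right_cancel₀ (ne_of_gt hπ) h'
      have h0 : (0:ℝ) < (n:ℝ) := by rw [hx2]; linarith [hx.1]
      have h2' : (n:ℝ) < 2 := by rw [hx2]; linarith [hx.2]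
      have hn1 : n = 1 := by
        have : (0:ℤ) < n := by exact_mod_cast h0
        have : n < 2 := by exact_mod_cast h2'
        omega
      rw [hn1] at hx2
      apply hxhalf
      push_cast at hx2
      linarith
    have hcoslt : |Real.cos (2*π*x)| < 1 := by
      rw [← sq_lt_one_iff_abs_lt_one]
      have := Real.sin_sq_add_cos_sq (2*π*x)
      have hsq : 0 < Real.sin (2*π*x) ^ 2 := by positivity
      linarith
    have ht1 : |t 1| < f 1 := by
      have h1 : t 1 = Real.cos (2*π*x) := by
        rw [ht]
        norm_num
      rw [h1, hf1]
      exact hcoslt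
    have hstrict : ∑' n, |t n| < Z := Summable.tsum_lt_tsum htf ht1 htsummable.abs hZsum
    have habs : |(-1:ℝ)^(k+1) * (2*π)^(2*k) / 2 / (2*k).factorial * (Pk k).eval x| < Z := by
      rw [hPk, ← hs.tsum_eq]
      calc |∑' n, t n| ≤ ∑' n, |t n| := by
            have := norm_tsum_le_tsum_norm (f := t) (by simpa [Real.norm_eq_abs] using htsummable.abs)
            simpa [Real.norm_eq_abs] using this
        _ < Z := hstrict
    have : A * |(Pk k).eval x| < Z := by
      rw [abs_mul, abs_div, abs_div, abs_mul, abs_pow, abs_neg, abs_one, one_pow, one_mul,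
        abs_of_nonneg (by positivity : (0:ℝ) ≤ (2*π)^(2*k)), abs_of_nonneg (by norm_num : (0:ℝ) ≤ (2:ℝ)),
        abs_of_nonneg (by positivity : (0:ℝ) ≤ ((2*k).factorial : ℝ)), ← hA] at habs
      exact habs
    rw [hM, lt_div_iff₀ hApos]
    linarith [this]

noncomputable def Ik (k : ℕ) : ℝ := ∫ t in Set.Ioi (0:ℝ), ((1+t^2)^k)⁻¹

lemma cont_Ik (k : ℕ) : Continuous (fun t : ℝ => ((1+t^2)^k)⁻¹) := by
  apply Continuous.inv₀
  · exact (continuous_const.add (continuous_pow 2)).pow k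
  · intro t; positivity

lemma integrableOn_Ik (k : ℕ) (hk : 1 ≤ k) :
    IntegrableOn (fun t : ℝ => ((1+t^2)^k)⁻¹) (Set.Ioi 0) := by
  have hsplit : Set.Ioc (0:ℝ) 1 ∪ Set.Ioi (1:ℝ) = Set.Ioi 0 :=
    Set.Ioc_union_Ioi_eq_Ioi zero_le_one
  rw [← hsplit]
  apply MeasureTheory.IntegrableOn.union
  · exact ((cont_Ik k).continuousOn.integrableOn_compact isCompact_Icc).mono_set
      Set.Ioc_subset_Icc_self
  · have hbase : IntegrableOn (fun t : ℝ => t ^ (-2:ℝ)) (Set.Ioi 1) :=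
      integrableOn_Ioi_rpow_of_lt (by norm_num) one_pos
    apply hbase.mono' ((cont_Ik k).aestronglyMeasurable.restrict)
    filter_upwards [ae_restrict_mem measurableSet_Ioi] with t ht
    have ht1 : (1:ℝ) ≤ t := le_of_lt ht
    have htpos : (0:ℝ) < t := lt_of_lt_of_le one_pos ht1
    rw [Real.norm_eq_abs, abs_of_nonneg (by positivity)]
    rw [Real.rpow_neg htpos.le, Real.rpow_two]
    apply inv_anti₀ (by positivity)
    calc t^2 ≤ 1 + t^2 := by nlinarith
      _ ≤ (1+t^2)^k := by
        apply le_self_pow₀ (by nlinarith) (by omega)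

lemma Ik_one : Ik 1 = π / 2 := by
  rw [Ik]
  have h := MeasureTheory.integral_Ioi_of_hasDerivAt_of_tendsto
    (f := Real.arctan) (f' := fun t : ℝ => ((1+t^2)^1)⁻¹) (a := 0) (m := π/2)
    (Real.continuous_arctan.continuousWithinAt)
    (fun x _ => by simpa [pow_one, one_div] using Real.hasDerivAt_arctan x)
    (integrableOn_Ik 1 le_rfl)
    (by simpa using Real.tendsto_arctan_atTop.mono_right nhdsWithin_le_nhds)
  rw [h, Real.arctan_zero, sub_zero]

lemma Ik_succ (k : ℕ) (hk : 1 ≤ k) :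
    Ik (k+1) = (2*(k:ℝ)-1)/(2*(k:ℝ)) * Ik k := by
  set F : ℝ → ℝ := fun t => t * ((1+t^2)^k)⁻¹ with hF
  set F' : ℝ → ℝ := fun t =>
    (1 - 2*(k:ℝ)) * ((1+t^2)^k)⁻¹ + 2*(k:ℝ) * ((1+t^2)^(k+1))⁻¹ with hF'
  have hderiv : ∀ t : ℝ, HasDerivAt F (F' t) t := by
    intro t
    have hpos : (0:ℝ) < 1 + t^2 := by positivity
    have h1 : HasDerivAt (fun t : ℝ => 1 + t^2) (2*t) t := by
      simpa using ((hasDerivAt_pow 2 t).const_add 1)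
    have h2 : HasDerivAt (fun t : ℝ => (1+t^2)^k) ((k:ℝ) * (1+t^2)^(k-1) * (2*t)) t :=
      (h1.pow k)
    have h3 : HasDerivAt (fun t : ℝ => ((1+t^2)^k)⁻¹)
        (-((k:ℝ) * (1+t^2)^(k-1) * (2*t)) / ((1+t^2)^k)^2) t :=
      h2.inv (by positivity)
    have hk1 : k - 1 + 1 = k := by omega
    have hyk : ((1:ℝ)+t^2)^(k-1) = (1+t^2)^k / (1+t^2) := by
      rw [eq_div_iff (ne_of_gt hpos), ← pow_succ, hk1]
    rw [hyk] at h3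
    have h4 := (hasDerivAt_id t).mul h3
    convert h4 using 1
    · rfl
    · rfl
    · rfl
    have h5 : ((1:ℝ)+t^2)^(k+1) = (1+t^2)^k * (1+t^2) := pow_succ _ _
    simp only [hF', h5, id_eq, one_mul]
    field_simp
    ring
  have htend : Tendsto F atTop (𝓝 0) := by
    apply squeeze_zero' (g := fun t : ℝ => t⁻¹)
    · filter_upwards [eventually_ge_atTop (1:ℝ)] with t ht
      have : (0:ℝ) < t := lt_of_lt_of_le one_pos ht
      simp only [hF]
      positivity
    · filter_upwards [eventually_ge_atTop (1:ℝ)] with t ht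
      have htpos : (0:ℝ) < t := lt_of_lt_of_le one_pos ht
      simp only [hF]
      have hle : t * t ≤ (1+t^2)^k := by
        calc t * t ≤ 1 + t^2 := by nlinarith
          _ ≤ (1+t^2)^k := le_self_pow₀ (by nlinarith) (by omega)
      calc t * ((1+t^2)^k)⁻¹ ≤ t * (t*t)⁻¹ := by
            apply mul_le_mul_of_nonneg_left (inv_anti₀ (by positivity) hle) htpos.le
        _ = t⁻¹ := by
            rw [mul_inv, ← mul_assoc, mul_inv_cancel₀ (ne_of_gt htpos), one_mul]
    · exact tendsto_inv_atTop_zero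
  have hint : IntegrableOn F' (Set.Ioi (0:ℝ)) := by
    apply MeasureTheory.Integrable.add
    · exact (integrableOn_Ik k hk).const_mul _
    · exact (integrableOn_Ik (k+1) (by omega)).const_mul _
  have hFTC := MeasureTheory.integral_Ioi_of_hasDerivAt_of_tendsto
    (f := F) (f' := F') (a := 0) (m := 0)
    ((hderiv 0).continuousAt.continuousWithinAt)
    (fun x _ => hderiv x) hint htend
  have hF0 : F 0 = 0 := by simp [hF]
  rw [hF0, sub_zero] at hFTC
  have hsplit : ∫ t in Set.Ioi (0:ℝ), F' t
      = (1 - 2*(k:ℝ)) * Ik k + 2*(k:ℝ) * Ik (k+1) := by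
    rw [hF']
    rw [MeasureTheory.integral_add ((integrableOn_Ik k hk).const_mul _)
      ((integrableOn_Ik (k+1) (by omega)).const_mul _)]
    rw [MeasureTheory.integral_const_mul, MeasureTheory.integral_const_mul]
    rfl
  rw [hsplit] at hFTC
  have hkpos : (0:ℝ) < 2*(k:ℝ) := by
    have : (1:ℝ) ≤ (k:ℝ) := by exact_mod_cast hk
    linarith
  field_simp
  linarith [hFTC]

lemma Ik_eq (k : ℕ) (hk : 1 ≤ k) :
    Ik k = Real.sqrt π * Real.Gamma ((k:ℝ) - 1/2) / (2 * Real.Gamma k) := by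
  induction k, hk using Nat.le_induction with
  | base =>
    rw [Ik_one]
    have h0 : ((1:ℕ):ℝ) - 1/2 = 1/2 := by norm_num
    have h1 : ((1:ℕ):ℝ) = 1 := by norm_num
    rw [h0, h1, Real.Gamma_one_half_eq, Real.Gamma_one, mul_one,
      Real.mul_self_sqrt Real.pi_pos.le]
  | succ k hk ih =>
    have hkR : (1:ℝ) ≤ (k:ℝ) := by exact_mod_cast hk
    have hGpos : 0 < Real.Gamma (k:ℝ) := Real.Gamma_pos_of_pos (by linarith)
    have hrec : Real.Gamma ((k:ℝ) - 1/2 + 1) = ((k:ℝ) - 1/2) * Real.Gamma ((k:ℝ) - 1/2) :=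
      Real.Gamma_add_one (by intro h; nlinarith [h])
    have hrec2 : Real.Gamma ((k:ℝ) + 1) = (k:ℝ) * Real.Gamma (k:ℝ) :=
      Real.Gamma_add_one (by positivity)
    rw [Ik_succ k hk, ih]
    push_cast
    rw [show (k:ℝ) + 1 - 1/2 = (k:ℝ) - 1/2 + 1 by ring, hrec, hrec2]
    have h1 : Real.Gamma ((k:ℝ)) ≠ 0 := ne_of_gt hGpos
    field_simp

lemma gamma_ineq (k : ℕ) (hk : 1 ≤ k) :
    Real.Gamma ((k:ℝ) + 1/2) ≤ Real.sqrt k * Real.Gamma k := by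
  have hkR : (1:ℝ) ≤ (k:ℝ) := by exact_mod_cast hk
  have hk0 : (0:ℝ) < (k:ℝ) := by linarith
  have hG1 : 0 < Real.Gamma (k:ℝ) := Real.Gamma_pos_of_pos hk0
  have hG2 : 0 < Real.Gamma ((k:ℝ)+1) := Real.Gamma_pos_of_pos (by linarith)
  have hmem1 : (k:ℝ) ∈ Set.Ioi (0:ℝ) := hk0
  have hmem2 : (k:ℝ)+1 ∈ Set.Ioi (0:ℝ) := by simp; linarith
  have hcvx := Real.convexOn_log_Gamma.2 hmem1 hmem2
    (by norm_num : (0:ℝ) ≤ 1/2) (by norm_num : (0:ℝ) ≤ 1/2) (by norm_num)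
  simp only [Function.comp, smul_eq_mul] at hcvx
  have harg : (1/2:ℝ) * (k:ℝ) + (1/2:ℝ) * ((k:ℝ)+1) = (k:ℝ) + 1/2 := by ring
  rw [harg] at hcvx
  have hGmid : 0 < Real.Gamma ((k:ℝ) + 1/2) := Real.Gamma_pos_of_pos (by linarith)
  have hexp := Real.exp_le_exp.mpr hcvx
  rw [Real.exp_log hGmid, Real.exp_add] at hexp
  have he1 : Real.exp (1/2 * Real.log (Real.Gamma (k:ℝ))) = Real.sqrt (Real.Gamma (k:ℝ)) := by
    rw [Real.sqrt_eq_rpow, Real.rpow_def_of_pos hG1]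
    ring_nf
  have he2 : Real.exp (1/2 * Real.log (Real.Gamma ((k:ℝ)+1))) = Real.sqrt (Real.Gamma ((k:ℝ)+1)) := by
    rw [Real.sqrt_eq_rpow, Real.rpow_def_of_pos hG2]
    ring_nf
  rw [he1, he2] at hexp
  calc Real.Gamma ((k:ℝ) + 1/2) ≤ Real.sqrt (Real.Gamma (k:ℝ)) * Real.sqrt (Real.Gamma ((k:ℝ)+1)) := hexp
    _ = Real.sqrt k * Real.Gamma k := by
        rw [Real.Gamma_add_one (ne_of_gt hk0), Real.sqrt_mul hk0.le,
          show Real.sqrt (Real.Gamma (k:ℝ)) * (Real.sqrt (k:ℝ) * Real.sqrt (Real.Gamma (k:ℝ)))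
            = Real.sqrt (k:ℝ) * (Real.sqrt (Real.Gamma (k:ℝ)) * Real.sqrt (Real.Gamma (k:ℝ))) from by ring,
          Real.mul_self_sqrt hG1.le]

lemma Ik_le (k : ℕ) (hk : 1 ≤ k) :
    (2*(k:ℝ)-1) * Ik k ≤ Real.sqrt (π * k) := by
  have hkR : (1:ℝ) ≤ (k:ℝ) := by exact_mod_cast hk
  have hG1 : 0 < Real.Gamma (k:ℝ) := Real.Gamma_pos_of_pos (by linarith)
  have hrec : Real.Gamma ((k:ℝ) - 1/2 + 1) = ((k:ℝ) - 1/2) * Real.Gamma ((k:ℝ) - 1/2) :=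
    Real.Gamma_add_one (by intro h; nlinarith [h])
  have harg : (k:ℝ) - 1/2 + 1 = (k:ℝ) + 1/2 := by ring
  rw [harg] at hrec
  have hGpos : 0 < Real.Gamma ((k:ℝ) - 1/2) := Real.Gamma_pos_of_pos (by linarith)
  rw [Ik_eq k hk]
  have key := gamma_ineq k hk
  rw [Real.sqrt_mul Real.pi_pos.le]
  calc (2*(k:ℝ)-1) * (Real.sqrt π * Real.Gamma ((k:ℝ) - 1/2) / (2 * Real.Gamma k))
      = Real.sqrt π * Real.Gamma ((k:ℝ)+1/2) / Real.Gamma k := by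
        rw [hrec]; field_simp
    _ ≤ Real.sqrt π * (Real.sqrt k * Real.Gamma k) / Real.Gamma k :=
        (div_le_div_iff_of_pos_right hG1).mpr (mul_le_mul_of_nonneg_left key (Real.sqrt_nonneg π))
    _ = Real.sqrt π * Real.sqrt k := by
        rw [mul_div_assoc, mul_div_assoc, div_self (ne_of_gt hG1), mul_one]

lemma cont_quad (k : ℕ) (c : ℝ) (hc : 0 < c) :
    Continuous (fun u : ℝ => ((u^2+c^2)^k)⁻¹) := by
  apply Continuous.inv₀
  · exact ((continuous_pow 2).add continuous_const).pow k
  · intro t; positivity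

lemma integrableOn_quad (k : ℕ) (hk : 1 ≤ k) (c : ℝ) (hc : 0 < c) :
    IntegrableOn (fun u : ℝ => ((u^2+c^2)^k)⁻¹) (Set.Ioi 0) := by
  have hsplit : Set.Ioc (0:ℝ) 1 ∪ Set.Ioi (1:ℝ) = Set.Ioi 0 :=
    Set.Ioc_union_Ioi_eq_Ioi zero_le_one
  rw [← hsplit]
  apply MeasureTheory.IntegrableOn.union
  · exact ((cont_quad k c hc).continuousOn.integrableOn_compact isCompact_Icc).mono_set
      Set.Ioc_subset_Icc_self
  · have hbase : IntegrableOn (fun t : ℝ => t ^ (-2:ℝ)) (Set.Ioi 1) :=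
      integrableOn_Ioi_rpow_of_lt (by norm_num) one_pos
    apply hbase.mono' ((cont_quad k c hc).aestronglyMeasurable.restrict)
    filter_upwards [ae_restrict_mem measurableSet_Ioi] with t ht
    have ht1 : (1:ℝ) ≤ t := le_of_lt ht
    have htpos : (0:ℝ) < t := lt_of_lt_of_le one_pos ht1
    rw [Real.norm_eq_abs, abs_of_nonneg (by positivity)]
    rw [Real.rpow_neg htpos.le, Real.rpow_two]
    apply inv_anti₀ (by positivity)
    calc t^2 = (t^2)^1 := (pow_one _).symm
      _ ≤ (t^2)^k := pow_le_pow_right₀ (by nlinarith) hk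
      _ ≤ (t^2+c^2)^k := pow_le_pow_left₀ (by positivity) (by nlinarith) k

lemma J_eq (k : ℕ) (hk : 1 ≤ k) (c : ℝ) (hc : 0 < c) :
    ∫ u in Set.Ioi (0:ℝ), ((u^2+c^2)^k)⁻¹ = Ik k / c^(2*k-1) := by
  have h := MeasureTheory.integral_comp_mul_left_Ioi
    (fun u : ℝ => ((u^2+c^2)^k)⁻¹) 0 hc
  rw [mul_zero] at h
  have hgc : (fun x : ℝ => (((c*x)^2+c^2)^k)⁻¹) = fun x : ℝ => (c^(2*k))⁻¹ * ((1+x^2)^k)⁻¹ := by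
    funext x
    rw [← mul_inv]
    congr 1
    rw [pow_mul, ← mul_pow]
    congr 1
    ring
  rw [hgc] at h
  rw [MeasureTheory.integral_const_mul] at h
  have h2 : (c^(2*k))⁻¹ * Ik k = c⁻¹ * ∫ u in Set.Ioi (0:ℝ), ((u^2+c^2)^k)⁻¹ := by
    rw [← Ik] at h
    rw [h]
    simp [smul_eq_mul]
  have hck : c^(2*k) = c^(2*k-1) * c := by
    rw [← pow_succ]
    congr 1
    omega
  rw [hck, mul_inv] at h2
  have h3 : c⁻¹ * ((c^(2*k-1))⁻¹ * Ik k) = c⁻¹ * ∫ u in Set.Ioi (0:ℝ), ((u^2+c^2)^k)⁻¹ := by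
    rw [← h2]; ring
  have h4 := mul_left_cancel₀ (inv_ne_zero (ne_of_gt hc)) h3
  rw [div_eq_inv_mul, ← h4]

end Aux

theorem abs_Rhatnext_lt_eta_sqrt_pi_k_mul (k : ℕ) (hk : 1 ≤ k) (z : ℂ)
    (hz : 0 ≤ z.re) (hz0 : z ≠ 0) :
    ‖Rhatnext k z‖ < eta k * Real.sqrt (π * k) * ‖That k z‖ := by
  obtain ⟨M, hMpos, hMeta, hMle, hMlt⟩ := bernoulli_sup_bound k hk
  have hkR : (1:ℝ) ≤ (k:ℝ) := by exact_mod_cast hk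
  have hkpos : (0:ℝ) < 2*(k:ℝ) := by linarith
  have h2k1 : (1:ℝ) ≤ 2*(k:ℝ) - 1 := by linarith
  set c : ℝ := ‖z‖ with hc
  have hcpos : 0 < c := norm_pos_iff.mpr hz0
  have haeval : ∀ x : ℝ, (Polynomial.aeval x (Polynomial.bernoulli (2*k)) : ℝ) = (Pk k).eval x := by
    intro x
    rw [Pk, Polynomial.aeval_def, Polynomial.eval₂_eq_eval_map]
  have e1 : ‖(2*(k:ℂ))‖ = 2*(k:ℝ) := by
    have h : (2*(k:ℂ)) = ((2*(k:ℝ) : ℝ) : ℂ) := by push_cast; ring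
    rw [h, Complex.norm_real, Real.norm_eq_abs, abs_of_pos hkpos]
  have e2 : ‖(2*(k:ℂ)-1)‖ = 2*(k:ℝ)-1 := by
    have h : (2*(k:ℂ)-1) = ((2*(k:ℝ)-1 : ℝ) : ℂ) := by push_cast; ring
    rw [h, Complex.norm_real, Real.norm_eq_abs, abs_of_pos (by linarith)]
  -- |That|
  have hThat : ‖That k z‖
      = |(Pk k).eval (1/2 : ℝ)| / (2*(k:ℝ) * (2*(k:ℝ)-1) * c^(2*k-1)) := by
    unfold That
    rw [haeval, norm_div, Complex.norm_real, Real.norm_eq_abs]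
    congr 1
    rw [norm_mul, norm_mul, norm_pow, e1, e2]
  -- the integrand and majorant
  set fC : ℝ → ℂ := fun u =>
    ((Polynomial.aeval (Int.fract (u + 1/2)) (Polynomial.bernoulli (2*k)) : ℝ) : ℂ) /
      ((2*(k:ℂ)) * ((u:ℂ)+z)^(2*k)) with hfC
  have hRhat : ‖Rhatnext k z‖ = ‖∫ u in Set.Ioi (0:ℝ), fC u‖ := by
    rw [show Rhatnext k z = -∫ u in Set.Ioi (0:ℝ), fC u from rfl,
      norm_neg]
  set gR : ℝ → ℝ := fun u => M/(2*(k:ℝ)) * ((u^2+c^2)^k)⁻¹ with hgR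
  have hnorm : ∀ u : ℝ, ‖fC u‖
      = |(Pk k).eval (Int.fract (u+1/2))| / (2*(k:ℝ) * ‖(u:ℂ)+z‖^(2*k)) := by
    intro u
    simp only [hfC]
    rw [norm_div, haeval, Complex.norm_real, Real.norm_eq_abs, norm_mul, norm_pow, e1]
  have hden : ∀ u : ℝ, 0 < u → (u^2+c^2)^k ≤ ‖(u:ℂ)+z‖^(2*k) := by
    intro u hu
    have h2 : u^2 + c^2 ≤ ‖(u:ℂ)+z‖^2 := by
      have hre : ((u:ℂ)+z).re = u + z.re := by simp
      have him : ((u:ℂ)+z).im = z.im := by simp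
      have habs : ‖(u:ℂ)+z‖^2 = (u+z.re)^2 + z.im^2 := by
        rw [Complex.sq_norm, Complex.normSq_apply, hre, him]
        ring
      have hcsq : c^2 = z.re^2 + z.im^2 := by
        rw [hc, Complex.sq_norm, Complex.normSq_apply]
        ring
      rw [habs, hcsq]
      nlinarith [mul_nonneg hu.le hz]
    calc (u^2+c^2)^k ≤ (‖(u:ℂ)+z‖^2)^k :=
          pow_le_pow_left₀ (by positivity) h2 k
      _ = ‖(u:ℂ)+z‖^(2*k) := (pow_mul _ 2 k).symm
  have hgeq : ∀ u : ℝ, gR u = M / (2*(k:ℝ) * (u^2+c^2)^k) := by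
    intro u
    simp only [hgR]
    rw [div_mul_eq_mul_div, mul_comm M ((u ^ 2 + c ^ 2) ^ k)⁻¹, inv_mul_eq_div, div_div,
      mul_comm ((u ^ 2 + c ^ 2) ^ k) (2*(k:ℝ))]
  have hle : ∀ u ∈ Set.Ioi (0:ℝ), ‖fC u‖ ≤ gR u := by
    intro u hu
    rw [hnorm u, hgeq u]
    apply div_le_div₀ hMpos.le
      (hMle _ ⟨Int.fract_nonneg _, (Int.fract_lt_one _).le⟩)
      (by positivity)
      (mul_le_mul_of_nonneg_left (hden u hu) hkpos.le)
  -- exceptional set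
  set S : Set ℝ := Set.range (fun n : ℤ => (n:ℝ)/2 - 1/2) with hS
  have hScount : S.Countable := Set.countable_range _
  have hlt : ∀ u ∈ Set.Ioi (0:ℝ) \ S, ‖fC u‖ < gR u := by
    rintro u ⟨hu0, huS⟩
    have hfr : Int.fract (u+1/2) = u + 1/2 - (⌊u+1/2⌋ : ℝ) := rfl
    have hxne0 : Int.fract (u+1/2) ≠ 0 := by
      intro h0
      apply huS
      refine ⟨2*⌊u+1/2⌋ , ?_⟩
      rw [hfr] at h0
      push_cast
      linarith
    have hxne12 : Int.fract (u+1/2) ≠ 1/2 := by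
      intro h0
      apply huS
      refine ⟨2*⌊u+1/2⌋+1 , ?_⟩
      rw [hfr] at h0
      push_cast
      linarith
    rw [hnorm u, hgeq u]
    apply div_lt_div₀
      (hMlt _ ⟨lt_of_le_of_ne (Int.fract_nonneg _) (Ne.symm hxne0), Int.fract_lt_one _⟩ hxne12)
      (mul_le_mul_of_nonneg_left (hden u hu0) hkpos.le)
      hMpos.le
      (by positivity)
  -- measurability and integrability
  have hmeas : AEStronglyMeasurable fC (volume.restrict (Set.Ioi 0)) := by
    apply Measurable.aestronglyMeasurable
    apply Measurable.div
    · apply Complex.measurable_ofReal.comp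
      have heqf : (fun u : ℝ => (Polynomial.aeval (Int.fract (u + 1/2)) (Polynomial.bernoulli (2*k)) : ℝ))
          = fun u : ℝ => (Pk k).eval (Int.fract (u + 1/2)) := by
        funext u; exact haeval _
      rw [heqf]
      exact ((Pk k).continuous.measurable).comp
        (measurable_fract.comp (measurable_id.add_const (1/2:ℝ)))
    · apply Continuous.measurable
      exact continuous_const.mul ((Complex.continuous_ofReal.add continuous_const).pow _)
  have hgInt : IntegrableOn gR (Set.Ioi 0) :=
    (integrableOn_quad k hk c hcpos).const_mul _
  have hfInt : IntegrableOn fC (Set.Ioi 0) := by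
    apply Integrable.mono' hgInt hmeas
    filter_upwards [ae_restrict_mem measurableSet_Ioi] with u hu
    exact hle u hu
  have hnInt : IntegrableOn (fun u => ‖fC u‖) (Set.Ioi 0) := hfInt.norm
  -- strict inequality of integrals
  have hstrict : (∫ u in Set.Ioi (0:ℝ), ‖fC u‖) < ∫ u in Set.Ioi (0:ℝ), gR u := by
    have hdiff : IntegrableOn (fun u => gR u - ‖fC u‖) (Set.Ioi 0) := hgInt.sub hnInt
    have hpos : 0 < ∫ u in Set.Ioi (0:ℝ), (gR u - ‖fC u‖) := by
      rw [MeasureTheory.integral_pos_iff_support_of_nonneg_ae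
        (by filter_upwards [ae_restrict_mem measurableSet_Ioi] with u hu
            exact sub_nonneg.2 (hle u hu)) hdiff]
      have hsub : Set.Ioi (0:ℝ) \ S ⊆ Function.support (fun u => gR u - ‖fC u‖) := by
        intro u hu
        exact ne_of_gt (sub_pos.2 (hlt u hu))
      have hmeq : volume.restrict (Set.Ioi 0) (Set.Ioi (0:ℝ) \ S) = ⊤ := by
        rw [Measure.restrict_apply' measurableSet_Ioi,
          Set.inter_eq_self_of_subset_left Set.diff_subset,
          measure_diff_null (hScount.measure_zero _), Real.volume_Ioi]
      calc (0:ENNReal) < ⊤ := by simp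
        _ = volume.restrict (Set.Ioi 0) (Set.Ioi (0:ℝ) \ S) := hmeq.symm
        _ ≤ _ := measure_mono hsub
    rw [MeasureTheory.integral_sub hgInt hnInt] at hpos
    linarith
  have hgval : (∫ u in Set.Ioi (0:ℝ), gR u) = M/(2*(k:ℝ)) * (Ik k / c^(2*k-1)) := by
    rw [hgR]
    rw [MeasureTheory.integral_const_mul, J_eq k hk c hcpos]
  -- final comparison
  have hIk := Ik_le k hk
  have key : Ik k / c^(2*k-1) ≤ Real.sqrt (π*k) / ((2*(k:ℝ)-1) * c^(2*k-1)) := by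
    rw [div_le_div_iff₀ (by positivity) (by positivity)]
    calc Ik k * ((2*(k:ℝ)-1) * c^(2*k-1)) = ((2*(k:ℝ)-1) * Ik k) * c^(2*k-1) := by ring
      _ ≤ Real.sqrt (π*k) * c^(2*k-1) := mul_le_mul_of_nonneg_right hIk (by positivity)
  have hfinal : M/(2*(k:ℝ)) * (Ik k / c^(2*k-1))
      ≤ eta k * Real.sqrt (π*k) * ‖That k z‖ := by
    rw [hThat, hMeta]
    have hPpos : 0 < |(Pk k).eval (1/2 : ℝ)| := by
      by_contra h
      push_neg at h
      have : |(Pk k).eval (1/2 : ℝ)| = 0 := le_antisymm h (abs_nonneg _)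
      rw [hMeta, this, mul_zero] at hMpos
      exact lt_irrefl 0 hMpos
    have hetapos : 0 < eta k := eta_pos k hk
    calc eta k * |(Pk k).eval (1/2 : ℝ)| /(2*(k:ℝ)) * (Ik k / c^(2*k-1))
        ≤ eta k * |(Pk k).eval (1/2 : ℝ)| /(2*(k:ℝ)) *
            (Real.sqrt (π*k) / ((2*(k:ℝ)-1) * c^(2*k-1))) :=
          mul_le_mul_of_nonneg_left key (by positivity)
      _ = eta k * Real.sqrt (π*k) *
            (|(Pk k).eval (1/2 : ℝ)| / (2*(k:ℝ) * (2*(k:ℝ)-1) * c^(2*k-1))) := by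
          field_simp
  calc ‖Rhatnext k z‖ = ‖∫ u in Set.Ioi (0:ℝ), fC u‖ := hRhat
    _ ≤ ∫ u in Set.Ioi (0:ℝ), ‖fC u‖ := MeasureTheory.norm_integral_le_integral_norm _
    _ < ∫ u in Set.Ioi (0:ℝ), gR u := hstrict
    _ = M/(2*(k:ℝ)) * (Ik k / c^(2*k-1)) := hgval
    _ ≤ eta k * Real.sqrt (π*k) * ‖That k z‖ := hfinal
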